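/- Let A and B be m×n complex matrices and E = B − A. Define δ₁ := max{‖A†‖₂⁴, ‖B†‖₂⁴}·(‖E‖_F² − max{‖AA†EB†‖_F²/‖B†‖₂², ‖A†EB†B‖_F²/‖A†‖₂²}) and δ₂ := max{‖A†‖₂⁴, ‖B†‖₂⁴}·(‖E‖_F² − max{‖BB†EA†‖_F²/‖A†‖₂², ‖B†EA†A‖_F²/‖B†‖₂²}). Then ‖B† − A†‖_F² ≤ (1/2)·(δ₁ + δ₂ + ‖A†EB†‖_F² + ‖B†EA†‖_F²), and moreover δ₁ + δ₂ ≤ 2·max{‖A†‖₂⁴, ‖B†‖₂⁴}·‖E‖_F² − (‖A†EB†‖_F² + ‖B†EA†‖_F²). -/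

import Mathlib

open Matrix

/-- The square of the Frobenius norm of a complex matrix. -/
noncomputable def frobSq {α β : Type*} [Fintype α] [Fintype β] (M : Matrix α β ℂ) : ℝ :=
  ∑ i, ∑ j, ‖M i j‖ ^ 2

/-- The spectral norm (ℓ²-operator norm) of a complex matrix. -/
noncomputable def spec {α β : Type*} [Fintype α] [Fintype β] [DecidableEq β]
    (M : Matrix α β ℂ) : ℝ :=
  ‖LinearMap.toContinuousLinearMap (Matrix.toEuclideanLin M)‖

/-- `X` is the Moore–Penrose inverse of `M` (the four Penrose equations). -/
def IsMoorePenrose {α β : Type*} [Fintype α] [Fintype β]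
    (M : Matrix α β ℂ) (X : Matrix β α ℂ) : Prop :=
  M * X * M = M ∧ X * M * X = X ∧ (M * X)ᴴ = M * X ∧ (X * M)ᴴ = X * M

set_option maxHeartbeats 1000000

open scoped Matrix.Norms.L2Operator

section Aux

variable {α β γ : Type*} [Fintype α] [Fintype β] [Fintype γ]

lemma spec_eq [DecidableEq β] (M : Matrix α β ℂ) : spec M = ‖M‖ := rfl

lemma spec_nonneg [DecidableEq β] (M : Matrix α β ℂ) : 0 ≤ spec M := by
  rw [spec_eq]; exact norm_nonneg _

lemma spec_pos [DecidableEq β] {M : Matrix α β ℂ} (h : M ≠ 0) : 0 < spec M := by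
  rw [spec_eq]; exact norm_pos_iff.mpr h

lemma spec_conjT [DecidableEq α] [DecidableEq β] (M : Matrix α β ℂ) : spec Mᴴ = spec M := by
  rw [spec_eq, spec_eq]; exact Matrix.l2_opNorm_conjTranspose M

lemma frobSq_nonneg (M : Matrix α β ℂ) : 0 ≤ frobSq M :=
  Finset.sum_nonneg fun _ _ => Finset.sum_nonneg fun _ _ => sq_nonneg _

lemma frobSq_col (M : Matrix α β ℂ) : frobSq M = ∑ j, ∑ i, ‖M i j‖ ^ 2 := Finset.sum_comm

lemma frobSq_conjT (M : Matrix α β ℂ) : frobSq Mᴴ = frobSq M := by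
  rw [frobSq, frobSq_col M]
  simp [Matrix.conjTranspose_apply]

lemma frobSq_neg (M : Matrix α β ℂ) : frobSq (-M) = frobSq M := by simp [frobSq]

lemma frobSq_zero : frobSq (0 : Matrix α β ℂ) = 0 := by simp [frobSq]

lemma trace_formula (X Y : Matrix α β ℂ) :
    Matrix.trace (X * Yᴴ) = ∑ i, ∑ j, X i j * (starRingEnd ℂ) (Y i j) := by
  simp [Matrix.trace, Matrix.diag, Matrix.mul_apply, Matrix.conjTranspose_apply]

lemma frobSq_add_of_trace (X Y : Matrix α β ℂ) (h : Matrix.trace (X * Yᴴ) = 0) :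
    frobSq (X + Y) = frobSq X + frobSq Y := by
  have key : ∀ (x y : ℂ), ‖x + y‖ ^ 2 = ‖x‖ ^ 2 + ‖y‖ ^ 2 + 2 * (x * (starRingEnd ℂ) y).re := by
    intro x y
    simp only [Complex.sq_norm]
    exact Complex.normSq_add x y
  have h' : (Matrix.trace (X * Yᴴ)).re = 0 := by rw [h]; rfl
  rw [trace_formula] at h'
  simp only [Complex.re_sum] at h'
  have : frobSq (X + Y) = frobSq X + frobSq Y
      + 2 * ∑ i, ∑ j, (X i j * (starRingEnd ℂ) (Y i j)).re := by
    simp only [frobSq, Matrix.add_apply, key, Finset.sum_add_distrib, Finset.mul_sum]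
  rw [this, h']; ring

lemma frobSq_mul_le_left [DecidableEq β] (X : Matrix α β ℂ) (Y : Matrix β γ ℂ) :
    frobSq (X * Y) ≤ spec X ^ 2 * frobSq Y := by
  rw [frobSq_col (X*Y), frobSq_col Y, Finset.mul_sum]
  refine Finset.sum_le_sum fun j _ => ?_
  set v : EuclideanSpace ℂ β := (WithLp.equiv 2 (β → ℂ)).symm (fun i => Y i j) with hv
  have hvn : ‖v‖ ^ 2 = ∑ i, ‖Y i j‖ ^ 2 := by
    rw [EuclideanSpace.norm_eq, Real.sq_sqrt (by positivity)]
    rfl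
  have hw : ∑ i, ‖(X*Y) i j‖ ^ 2
      = ‖((WithLp.equiv 2 (α → ℂ)).symm (X *ᵥ fun i => Y i j) : EuclideanSpace ℂ α)‖ ^ 2 := by
    rw [EuclideanSpace.norm_eq, Real.sq_sqrt (by positivity)]
    refine Finset.sum_congr rfl fun i _ => ?_
    congr 1
  have hle : ‖((WithLp.equiv 2 (α → ℂ)).symm (X *ᵥ fun i => Y i j) : EuclideanSpace ℂ α)‖
      ≤ spec X * ‖v‖ := by
    rw [spec_eq]
    exact Matrix.l2_opNorm_mulVec X v
  calc ∑ i, ‖(X*Y) i j‖ ^ 2 = _ := hw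
    _ ≤ (spec X * ‖v‖) ^ 2 := by
        apply pow_le_pow_left₀ (norm_nonneg _) hle
    _ = spec X ^ 2 * ∑ i, ‖Y i j‖ ^ 2 := by rw [mul_pow, hvn]

lemma frobSq_mul_le_right [DecidableEq α] [DecidableEq β] [DecidableEq γ]
    (X : Matrix α β ℂ) (Y : Matrix β γ ℂ) :
    frobSq (X * Y) ≤ frobSq X * spec Y ^ 2 := by
  have h := frobSq_mul_le_left Yᴴ Xᴴ
  rw [← Matrix.conjTranspose_mul, frobSq_conjT, frobSq_conjT, spec_conjT] at h
  linarith

lemma proj_right (E : Matrix α β ℂ) (Q : Matrix β β ℂ) (hQ : Qᴴ = Q) (hQQ : Q * Q = Q) :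
    frobSq (E * Q) + frobSq (E - E * Q) = frobSq E := by
  have h0 : (E * Q) * (E - E * Q)ᴴ = 0 := by
    rw [Matrix.conjTranspose_sub, Matrix.conjTranspose_mul, hQ, Matrix.mul_sub]
    rw [show E * Q * (Q * Eᴴ) = E * Q * Eᴴ by
      rw [← Matrix.mul_assoc, Matrix.mul_assoc E Q Q, hQQ]]
    exact sub_self _
  have h := frobSq_add_of_trace (E*Q) (E - E*Q) (by rw [h0, Matrix.trace_zero])
  rw [show E * Q + (E - E * Q) = E by abel] at h
  linarith

lemma proj_left (E : Matrix α β ℂ) (P : Matrix α α ℂ) (hP : Pᴴ = P) (hPP : P * P = P) :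
    frobSq (P * E) + frobSq (E - P * E) = frobSq E := by
  have htr : Matrix.trace ((P * E) * (E - P * E)ᴴ) = 0 := by
    rw [Matrix.conjTranspose_sub, Matrix.conjTranspose_mul, hP, Matrix.mul_sub,
      Matrix.trace_sub]
    have : Matrix.trace (P * E * (Eᴴ * P)) = Matrix.trace (P * E * Eᴴ) := by
      rw [Matrix.trace_mul_comm (P*E) (Eᴴ*P), Matrix.mul_assoc Eᴴ P (P*E),
        ← Matrix.mul_assoc P P E, hPP, Matrix.trace_mul_comm Eᴴ (P*E)]
    rw [this, sub_self]
  have h := frobSq_add_of_trace (P*E) (E - P*E) htr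
  rw [show P * E + (E - P * E) = E by abel] at h
  linarith

lemma key_split (E : Matrix α β ℂ) (P : Matrix α α ℂ) (Q : Matrix β β ℂ)
    (hP : Pᴴ = P) (hPP : P * P = P) (hQ : Qᴴ = Q) (hQQ : Q * Q = Q)
    (h0 : E - P * E - E * Q + P * E * Q = 0) :
    frobSq (E - P * E) + frobSq (E - E * Q) = frobSq E - frobSq (P * (E * Q)) := by
  have e2 := proj_right E Q hQ hQQ
  have e4 := proj_left (E*Q) P hP hPP
  have e5 := proj_right (E - P*E) Q hQ hQQ
  have hz : (E - P*E) - (E - P*E)*Q = 0 := by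
    have h1 : E - P * E - (E * Q - P * E * Q) = E - P*E - E*Q + P*E*Q := by abel
    rw [Matrix.sub_mul, h1]; exact h0
  rw [hz, frobSq_zero] at e5
  have hcongr : (E - P*E)*Q = E*Q - P*(E*Q) := by rw [Matrix.sub_mul, Matrix.mul_assoc]
  rw [hcongr] at e5
  linarith

lemma mulassoc2 {α β γ δ : Type*} [Fintype α] [Fintype β] [Fintype γ] [Fintype δ]
    {a : Matrix α β ℂ} {b : Matrix β γ ℂ} {c : Matrix α γ ℂ}
    (h : a * b = c) (M : Matrix γ δ ℂ) : a * (b * M) = c * M := by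
  rw [← Matrix.mul_assoc, h]

lemma mulassoc3 {α β γ δ ε : Type*} [Fintype α] [Fintype β] [Fintype γ] [Fintype δ] [Fintype ε]
    {a : Matrix α β ℂ} {b : Matrix β γ ℂ} {c : Matrix γ δ ℂ} {d : Matrix α δ ℂ}
    (h : a * b * c = d) (M : Matrix δ ε ℂ) : a * (b * (c * M)) = d * M := by
  rw [← Matrix.mul_assoc, ← Matrix.mul_assoc, h]

lemma mulassoc3' {α β γ δ : Type*} [Fintype α] [Fintype β] [Fintype γ] [Fintype δ]
    {a : Matrix α β ℂ} {b : Matrix β γ ℂ} {c : Matrix γ δ ℂ} {d : Matrix α δ ℂ}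
    (h : a * b * c = d) : a * (b * c) = d := by
  rw [← Matrix.mul_assoc, h]

end Aux

section Main

variable {α β : Type*} [Fintype α] [Fintype β] [DecidableEq α] [DecidableEq β]

lemma decomp (A B : Matrix α β ℂ) (X Y : Matrix β α ℂ)
    (hAX : IsMoorePenrose A X) (hBY : IsMoorePenrose B Y)
    (E : Matrix α β ℂ) (hE : E = B - A) :
    frobSq (Y - X) = frobSq (Y * E * X)
      + frobSq (Y * Yᴴ * Eᴴ - Y * Yᴴ * Eᴴ * (A * X))
      + frobSq (Eᴴ * Xᴴ * X - Y * B * (Eᴴ * Xᴴ * X)) := by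
  obtain ⟨hAXA, hXAX, hAXh, hXAh⟩ := hAX
  obtain ⟨hBYB, hYBY, hBYh, hYBh⟩ := hBY
  -- derived identities
  have hAh : Aᴴ * (A * X) = Aᴴ := by
    have h := congrArg conjTranspose hAXA
    rw [Matrix.conjTranspose_mul, hAXh] at h
    exact h
  have hYYB : Y * Yᴴ * Bᴴ = Y := by
    have h1 : Yᴴ * Bᴴ = B * Y := by rw [← Matrix.conjTranspose_mul, hBYh]
    rw [Matrix.mul_assoc, h1, ← Matrix.mul_assoc, hYBY]
  have hBBh : Y * B * Bᴴ = Bᴴ := by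
    have h2 : B * (Y * B) = B := by rw [← Matrix.mul_assoc]; exact hBYB
    have h := congrArg conjTranspose h2
    rw [Matrix.conjTranspose_mul, hYBh] at h
    exact h
  have hAhXh : Aᴴ * Xᴴ = X * A := by rw [← Matrix.conjTranspose_mul, hXAh]
  -- structure of T2 and T3
  have h2 : Y * Yᴴ * Eᴴ - Y * Yᴴ * Eᴴ * (A * X) = Y - Y * (A * X) := by
    rw [hE, Matrix.conjTranspose_sub, Matrix.mul_sub, Matrix.sub_mul, hYYB,
      Matrix.mul_assoc (Y*Yᴴ) Aᴴ (A*X), hAh]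
    abel
  have h3 : Eᴴ * Xᴴ * X - Y * B * (Eᴴ * Xᴴ * X) = Y * (B * X) - X := by
    rw [hE, Matrix.conjTranspose_sub, Matrix.sub_mul, Matrix.sub_mul, hAhXh,
      show X * A * X = X from hXAX, Matrix.mul_sub]
    have haux : Y*B*(Bᴴ*Xᴴ*X) = Bᴴ*Xᴴ*X := by
      rw [Matrix.mul_assoc Bᴴ Xᴴ X, ← Matrix.mul_assoc (Y*B) Bᴴ (Xᴴ*X), hBBh,
        ← Matrix.mul_assoc]
    rw [haux]
    have haux2 : Y * B * X = Y * (B * X) := Matrix.mul_assoc Y B X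
    rw [← haux2]
    abel
  have hsum : Y - X = -(Y * E * X) + (Y - Y * (A * X)) + (Y * (B * X) - X) := by
    rw [hE, Matrix.mul_sub Y B A, Matrix.sub_mul, Matrix.mul_assoc Y A X,
      Matrix.mul_assoc Y B X]
    abel
  -- orthogonality
  have o12 : Matrix.trace (-(Y * E * X) * (Y - Y * (A * X))ᴴ) = 0 := by
    have : -(Y * E * X) * (Y - Y * (A * X))ᴴ = 0 := by
      simp only [Matrix.conjTranspose_sub, Matrix.conjTranspose_mul, hAXh,
        Matrix.mul_sub, Matrix.sub_mul, Matrix.neg_mul, Matrix.mul_neg, Matrix.mul_assoc,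
        mulassoc3 hXAX, mulassoc3' hXAX]
      abel
    rw [this, Matrix.trace_zero]
  have hBhYh : Bᴴ * Yᴴ = Y * B := by rw [← Matrix.conjTranspose_mul, hYBh]
  have hT3h : (Eᴴ * Xᴴ * X - Y * B * (Eᴴ * Xᴴ * X))ᴴ
      = Xᴴ * (X * E) - Xᴴ * (X * E) * (Y * B) := by
    simp only [Matrix.conjTranspose_sub, Matrix.conjTranspose_mul,
      Matrix.conjTranspose_conjTranspose, Matrix.mul_assoc, mulassoc2 hBhYh, hBhYh]
  have o13 : Matrix.trace (-(Y * E * X) * (Eᴴ * Xᴴ * X - Y * B * (Eᴴ * Xᴴ * X))ᴴ) = 0 := by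
    rw [hT3h, Matrix.trace_mul_comm]
    have : (Xᴴ * (X * E) - Xᴴ * (X * E) * (Y * B)) * -(Y * E * X) = 0 := by
      simp only [Matrix.mul_sub, Matrix.sub_mul, Matrix.neg_mul, Matrix.mul_neg,
        Matrix.mul_assoc, mulassoc3 hYBY, mulassoc3' hYBY]
      abel
    rw [this, Matrix.trace_zero]
  have o23 : Matrix.trace ((Y - Y * (A * X)) * (Eᴴ * Xᴴ * X - Y * B * (Eᴴ * Xᴴ * X))ᴴ) = 0 := by
    rw [hT3h, Matrix.trace_mul_comm]
    have : (Xᴴ * (X * E) - Xᴴ * (X * E) * (Y * B)) * (Y - Y * (A * X)) = 0 := by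
      simp only [Matrix.mul_sub, Matrix.sub_mul, Matrix.neg_mul, Matrix.mul_neg,
        Matrix.mul_assoc, mulassoc3 hYBY, mulassoc3' hYBY]
      abel
    rw [this, Matrix.trace_zero]
  -- assemble
  have step1 : Matrix.trace ((-(Y * E * X) + (Y - Y * (A * X)))
      * (Eᴴ * Xᴴ * X - Y * B * (Eᴴ * Xᴴ * X))ᴴ) = 0 := by
    rw [Matrix.add_mul, Matrix.trace_add, o13, o23, add_zero]
  calc frobSq (Y - X)
      = frobSq (-(Y * E * X) + (Y - Y * (A * X)) + (Y * (B * X) - X)) := by rw [← hsum]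
    _ = frobSq (-(Y * E * X) + (Y - Y * (A * X)))
        + frobSq (Eᴴ * Xᴴ * X - Y * B * (Eᴴ * Xᴴ * X)) := by
        rw [← h3]
        exact frobSq_add_of_trace _ _ step1
    _ = frobSq (-(Y * E * X)) + frobSq (Y - Y * (A * X))
        + frobSq (Eᴴ * Xᴴ * X - Y * B * (Eᴴ * Xᴴ * X)) := by
        rw [frobSq_add_of_trace _ _ o12]
    _ = frobSq (Y * E * X) + frobSq (Y * Yᴴ * Eᴴ - Y * Yᴴ * Eᴴ * (A * X))
        + frobSq (Eᴴ * Xᴴ * X - Y * B * (Eᴴ * Xᴴ * X)) := by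
        rw [frobSq_neg, h2]

lemma Sbound (A B : Matrix α β ℂ) (X Y : Matrix β α ℂ)
    (hAX : IsMoorePenrose A X) (hBY : IsMoorePenrose B Y)
    (hX0 : X ≠ 0) (hY0 : Y ≠ 0)
    (E : Matrix α β ℂ) (hE : E = B - A) :
    frobSq (Y * Yᴴ * Eᴴ - Y * Yᴴ * Eᴴ * (A * X)) + frobSq (Eᴴ * Xᴴ * X - Y * B * (Eᴴ * Xᴴ * X))
      ≤ max (spec X ^ 4) (spec Y ^ 4)
        * (frobSq E - max (frobSq (A * X * E * Y) / spec Y ^ 2)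
            (frobSq (X * E * Y * B) / spec X ^ 2)) := by
  obtain ⟨hAXA, hXAX, hAXh, hXAh⟩ := hAX
  obtain ⟨hBYB, hYBY, hBYh, hYBh⟩ := hBY
  have ha := spec_pos hX0
  have hb := spec_pos hY0
  have ha2 : (0:ℝ) < spec X ^ 2 := by positivity
  have hb2 : (0:ℝ) < spec Y ^ 2 := by positivity
  set M : ℝ := max (spec X ^ 4) (spec Y ^ 4) with hM
  have hM0 : 0 ≤ M := le_trans (by positivity) (le_max_left (spec X ^ 4) (spec Y ^ 4))
  -- projections
  have hP : (A * X)ᴴ = A * X := hAXh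
  have hPP : (A * X) * (A * X) = A * X := by rw [← Matrix.mul_assoc, hAXA]
  have hQ : (Y * B)ᴴ = Y * B := hYBh
  have hQQ : (Y * B) * (Y * B) = Y * B := by rw [← Matrix.mul_assoc, hYBY]
  have h0 : E - (A * X) * E - E * (Y * B) + (A * X) * E * (Y * B) = 0 := by
    rw [hE]
    simp only [Matrix.mul_sub, Matrix.sub_mul, Matrix.mul_assoc,
      mulassoc3 hAXA, mulassoc3' hAXA, mulassoc3 hBYB, mulassoc3' hBYB]
    abel
  have hkey := key_split E (A*X) (Y*B) hP hPP hQ hQQ h0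
  -- bound the first term
  have hXhAh : Xᴴ * Aᴴ = A * X := by rw [← Matrix.conjTranspose_mul, hAXh]
  have hfac2 : Y * Yᴴ * Eᴴ - Y * Yᴴ * Eᴴ * (A * X) = Y * (Yᴴ * (E - (A * X) * E)ᴴ) := by
    simp only [Matrix.conjTranspose_sub, Matrix.conjTranspose_mul, hXhAh, mulassoc2 hXhAh,
      Matrix.mul_sub, Matrix.mul_assoc]
  have hb1 : frobSq (Y * (Yᴴ * (E - (A * X) * E)ᴴ))
      ≤ spec Y ^ 2 * frobSq (Yᴴ * (E - (A * X) * E)ᴴ) := frobSq_mul_le_left _ _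
  have hb2' : frobSq (Yᴴ * (E - (A * X) * E)ᴴ)
      ≤ spec Yᴴ ^ 2 * frobSq ((E - (A * X) * E)ᴴ) := frobSq_mul_le_left _ _
  have hT2 : frobSq (Y * Yᴴ * Eᴴ - Y * Yᴴ * Eᴴ * (A * X))
      ≤ spec Y ^ 4 * frobSq (E - (A * X) * E) := by
    rw [hfac2]
    rw [spec_conjT, frobSq_conjT] at hb2'
    calc frobSq (Y * (Yᴴ * (E - (A * X) * E)ᴴ))
        ≤ spec Y ^ 2 * frobSq (Yᴴ * (E - (A * X) * E)ᴴ) := hb1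
      _ ≤ spec Y ^ 2 * (spec Y ^ 2 * frobSq (E - (A * X) * E)) :=
          mul_le_mul_of_nonneg_left hb2' hb2.le
      _ = spec Y ^ 4 * frobSq (E - (A * X) * E) := by ring
  -- bound the second term
  have hfac3 : (Eᴴ * Xᴴ * X - Y * B * (Eᴴ * Xᴴ * X))ᴴ = Xᴴ * (X * (E - E * (Y * B))) := by
    have hBhYh : Bᴴ * Yᴴ = Y * B := by rw [← Matrix.conjTranspose_mul, hYBh]
    simp only [Matrix.conjTranspose_sub, Matrix.conjTranspose_mul,
      Matrix.conjTranspose_conjTranspose, Matrix.mul_sub, Matrix.mul_assoc,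
      mulassoc2 hBhYh, hBhYh]
  have hc1 : frobSq (Xᴴ * (X * (E - E * (Y * B))))
      ≤ spec Xᴴ ^ 2 * frobSq (X * (E - E * (Y * B))) := frobSq_mul_le_left _ _
  have hc2 : frobSq (X * (E - E * (Y * B)))
      ≤ spec X ^ 2 * frobSq (E - E * (Y * B)) := frobSq_mul_le_left _ _
  have hT3 : frobSq (Eᴴ * Xᴴ * X - Y * B * (Eᴴ * Xᴴ * X))
      ≤ spec X ^ 4 * frobSq (E - E * (Y * B)) := by
    rw [← frobSq_conjT (Eᴴ * Xᴴ * X - Y * B * (Eᴴ * Xᴴ * X)), hfac3]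
    rw [spec_conjT] at hc1
    calc frobSq (Xᴴ * (X * (E - E * (Y * B))))
        ≤ spec X ^ 2 * frobSq (X * (E - E * (Y * B))) := hc1
      _ ≤ spec X ^ 2 * (spec X ^ 2 * frobSq (E - E * (Y * B))) :=
          mul_le_mul_of_nonneg_left hc2 ha2.le
      _ = spec X ^ 4 * frobSq (E - E * (Y * B)) := by ring
  -- compare the inner correction terms
  have hu : frobSq (A * X * E * Y) ≤ frobSq ((A * X) * (E * (Y * B))) * spec Y ^ 2 := by
    have hid : (A * X) * (E * (Y * B)) * Y = A * X * E * Y := by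
      simp only [Matrix.mul_assoc, mulassoc3 hYBY, mulassoc3' hYBY]
    calc frobSq (A * X * E * Y) = frobSq ((A * X) * (E * (Y * B)) * Y) := by rw [hid]
      _ ≤ frobSq ((A * X) * (E * (Y * B))) * spec Y ^ 2 := frobSq_mul_le_right _ _
  have hv : frobSq (X * E * Y * B) ≤ spec X ^ 2 * frobSq ((A * X) * (E * (Y * B))) := by
    have hid : X * ((A * X) * (E * (Y * B))) = X * E * Y * B := by
      simp only [Matrix.mul_assoc, mulassoc3 hXAX, mulassoc3' hXAX]
    calc frobSq (X * E * Y * B) = frobSq (X * ((A * X) * (E * (Y * B)))) := by rw [hid]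
      _ ≤ spec X ^ 2 * frobSq ((A * X) * (E * (Y * B))) := frobSq_mul_le_left _ _
  have hmax : max (frobSq (A * X * E * Y) / spec Y ^ 2) (frobSq (X * E * Y * B) / spec X ^ 2)
      ≤ frobSq ((A * X) * (E * (Y * B))) := by
    apply max_le
    · rw [div_le_iff₀ hb2]; exact hu
    · rw [div_le_iff₀ ha2, mul_comm]; exact hv
  -- assemble
  calc frobSq (Y * Yᴴ * Eᴴ - Y * Yᴴ * Eᴴ * (A * X))
        + frobSq (Eᴴ * Xᴴ * X - Y * B * (Eᴴ * Xᴴ * X))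
      ≤ M * frobSq (E - (A * X) * E) + M * frobSq (E - E * (Y * B)) := by
        have h1 : spec Y ^ 4 * frobSq (E - (A * X) * E) ≤ M * frobSq (E - (A * X) * E) :=
          mul_le_mul_of_nonneg_right (le_max_right _ _) (frobSq_nonneg _)
        have h2 : spec X ^ 4 * frobSq (E - E * (Y * B)) ≤ M * frobSq (E - E * (Y * B)) :=
          mul_le_mul_of_nonneg_right (le_max_left _ _) (frobSq_nonneg _)
        linarith
    _ = M * (frobSq E - frobSq ((A * X) * (E * (Y * B)))) := by rw [← mul_add, hkey]
    _ ≤ M * (frobSq E - max (frobSq (A * X * E * Y) / spec Y ^ 2)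
            (frobSq (X * E * Y * B) / spec X ^ 2)) := by
        apply mul_le_mul_of_nonneg_left _ hM0
        linarith

lemma claim2_half (A B : Matrix α β ℂ) (X Y : Matrix β α ℂ)
    (hBY : IsMoorePenrose B Y) (hX0 : X ≠ 0) (hY0 : Y ≠ 0) (E : Matrix α β ℂ) :
    frobSq (X * E * Y) ≤ max (spec X ^ 4) (spec Y ^ 4)
      * max (frobSq (A * X * E * Y) / spec Y ^ 2) (frobSq (X * E * Y * B) / spec X ^ 2) := by
  obtain ⟨hBYB, hYBY, hBYh, hYBh⟩ := hBY
  have ha := spec_pos hX0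
  have hb := spec_pos hY0
  have ha2 : (0:ℝ) < spec X ^ 2 := by positivity
  have hM0 : (0:ℝ) ≤ max (spec X ^ 4) (spec Y ^ 4) :=
    le_trans (by positivity) (le_max_left (spec X ^ 4) (spec Y ^ 4))
  have hMab : spec X ^ 2 * spec Y ^ 2 ≤ max (spec X ^ 4) (spec Y ^ 4) := by
    rcases le_total (spec X) (spec Y) with h | h
    · refine le_trans ?_ (le_max_right _ _)
      have hx2 : spec X ^ 2 ≤ spec Y ^ 2 := by nlinarith
      calc spec X ^ 2 * spec Y ^ 2 ≤ spec Y ^ 2 * spec Y ^ 2 :=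
            mul_le_mul_of_nonneg_right hx2 (by positivity)
        _ = spec Y ^ 4 := by ring
    · refine le_trans ?_ (le_max_left _ _)
      have hy2 : spec Y ^ 2 ≤ spec X ^ 2 := by nlinarith
      calc spec X ^ 2 * spec Y ^ 2 ≤ spec X ^ 2 * spec X ^ 2 :=
            mul_le_mul_of_nonneg_left hy2 (by positivity)
        _ = spec X ^ 4 := by ring
  have h1 : frobSq (X * E * Y) ≤ frobSq (X * E * Y * B) * spec Y ^ 2 := by
    have hid : X * E * Y * B * Y = X * E * Y := by
      simp only [Matrix.mul_assoc, mulassoc3 hYBY, mulassoc3' hYBY]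
    calc frobSq (X * E * Y) = frobSq (X * E * Y * B * Y) := by rw [hid]
      _ ≤ frobSq (X * E * Y * B) * spec Y ^ 2 := frobSq_mul_le_right _ _
  have h2 : frobSq (X * E * Y)
      ≤ max (spec X ^ 4) (spec Y ^ 4) * (frobSq (X * E * Y * B) / spec X ^ 2) := by
    rw [mul_div_assoc', le_div_iff₀ ha2]
    calc frobSq (X * E * Y) * spec X ^ 2
        ≤ (frobSq (X * E * Y * B) * spec Y ^ 2) * spec X ^ 2 :=
          mul_le_mul_of_nonneg_right h1 ha2.le
      _ = (spec X ^ 2 * spec Y ^ 2) * frobSq (X * E * Y * B) := by ring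
      _ ≤ max (spec X ^ 4) (spec Y ^ 4) * frobSq (X * E * Y * B) :=
          mul_le_mul_of_nonneg_right hMab (frobSq_nonneg _)
  exact h2.trans (mul_le_mul_of_nonneg_left (le_max_right _ _) hM0)

end Main

theorem stmt14 {m n : ℕ}
    (A B : Matrix (Fin m) (Fin n) ℂ)
    (Adag Bdag : Matrix (Fin n) (Fin m) ℂ)
    (hA : IsMoorePenrose A Adag) (hB : IsMoorePenrose B Bdag)
    (hA0 : A ≠ 0) (hB0 : B ≠ 0)
    (E : Matrix (Fin m) (Fin n) ℂ) (hE : E = B - A)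
    (δ₁ δ₂ : ℝ)
    (hδ₁ : δ₁ = max (spec Adag ^ 4) (spec Bdag ^ 4)
        * (frobSq E - max (frobSq (A * Adag * E * Bdag) / spec Bdag ^ 2)
            (frobSq (Adag * E * Bdag * B) / spec Adag ^ 2)))
    (hδ₂ : δ₂ = max (spec Adag ^ 4) (spec Bdag ^ 4)
        * (frobSq E - max (frobSq (B * Bdag * E * Adag) / spec Adag ^ 2)
            (frobSq (Bdag * E * Adag * A) / spec Bdag ^ 2))) :
    frobSq (Bdag - Adag)
        ≤ 1 / 2 * (δ₁ + δ₂ + frobSq (Adag * E * Bdag) + frobSq (Bdag * E * Adag))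
    ∧ δ₁ + δ₂ ≤ 2 * max (spec Adag ^ 4) (spec Bdag ^ 4) * frobSq E
        - (frobSq (Adag * E * Bdag) + frobSq (Bdag * E * Adag)) := by
  have hAd0 : Adag ≠ 0 := by
    intro h
    apply hA0
    have h1 := hA.1
    rw [h] at h1
    simpa using h1.symm
  have hBd0 : Bdag ≠ 0 := by
    intro h
    apply hB0
    have h1 := hB.1
    rw [h] at h1
    simpa using h1.symm
  have hE' : -E = A - B := by rw [hE, neg_sub]
  have d1 := decomp A B Adag Bdag hA hB E hE
  have s1 := Sbound A B Adag Bdag hA hB hAd0 hBd0 E hE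
  have d2 := decomp B A Bdag Adag hB hA (-E) hE'
  have s2 := Sbound B A Bdag Adag hB hA hBd0 hAd0 (-E) hE'
  have c2a := claim2_half A B Adag Bdag hB hAd0 hBd0 E
  have c2b := claim2_half B A Bdag Adag hA hBd0 hAd0 (-E)
  simp only [Matrix.conjTranspose_neg, Matrix.mul_neg, Matrix.neg_mul, neg_sub_neg,
    frobSq_neg, neg_neg] at d2 s2 c2b
  rw [max_comm (spec Bdag ^ 4) (spec Adag ^ 4)] at s2 c2b
  rw [show frobSq (Adag - Bdag) = frobSq (Bdag - Adag) by
    rw [← frobSq_neg (Bdag - Adag), neg_sub]] at d2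
  rw [← hδ₁] at s1
  rw [← hδ₂] at s2
  have e1 : δ₁ = max (spec Adag ^ 4) (spec Bdag ^ 4) * frobSq E
      - max (spec Adag ^ 4) (spec Bdag ^ 4)
        * max (frobSq (A * Adag * E * Bdag) / spec Bdag ^ 2)
            (frobSq (Adag * E * Bdag * B) / spec Adag ^ 2) := by
    rw [hδ₁, mul_sub]
  have e2 : δ₂ = max (spec Adag ^ 4) (spec Bdag ^ 4) * frobSq E
      - max (spec Adag ^ 4) (spec Bdag ^ 4)
        * max (frobSq (B * Bdag * E * Adag) / spec Adag ^ 2)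
            (frobSq (Bdag * E * Adag * A) / spec Bdag ^ 2) := by
    rw [hδ₂, mul_sub]
  constructor
  · linarith
  · linarith
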